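/- For every integer t ≥ 0 and every s_{0:t} ∈ E^{t+1} with s_0 = l_0 and F^{s_t}((l(t),∞)) > 0: (i) μ(S_{0:t} = s_{0:t} and S_{t+1} = s_t) = μ(S_{0:t} = s_{0:t}) · F^{s_t}((x(t),∞)) / F^{s_t}((l(t),∞)); and (ii) for every j ∈ E with j ≠ s_t, μ(S_{0:t} = s_{0:t} and S_{t+1} = j) = μ(S_{0:t} = s_{0:t}) · [F^{s_t}({x(t)}) / F^{s_t}((l(t),∞))] · P^{s_t,j}, where x(t) = l(t)+1 and l(t) is computed from the path s_{0:t}. In particular the one-step predictive law of S given its past depends only on the current state and the current holding duration. -/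

import Mathlib

open MeasureTheory

/-! # Setup

As in the paper: `μ` is the law on `Ω = ℕ → E × ℕ+` of a Markov renewal process
`{(L_n, T_n)}` with characteristic couple `(P, F)` starting at `l₀` (hypothesis `hμ`),
and `S t = L (N t)` is the associated semi-Markov process.  For a finite path `s_{0:t}`,
`l(t) = t - τ_{N(t)}` is the current holding duration and `x(t) = l(t) + 1`. -/

instance : MeasurableSpace ℕ+ := ⊤

variable {E : Type*}

def tauProc (ω : ℕ → E × ℕ+) (n : ℕ) : ℕ := ∑ h ∈ Finset.range n, ((ω h).2 : ℕ)

noncomputable def NProc (ω : ℕ → E × ℕ+) (t : ℕ) : ℕ :=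
  ((Finset.Icc 1 t).filter (fun n => tauProc ω n ≤ t)).card

noncomputable def SProc (ω : ℕ → E × ℕ+) (t : ℕ) : E := (ω (NProc ω t)).1

noncomputable def jumpSet [DecidableEq E] (s : ℕ → E) (t : ℕ) : Finset ℕ :=
  (Finset.Icc 1 t).filter (fun r => s r ≠ s (r - 1))

noncomputable def numJumps [DecidableEq E] (s : ℕ → E) (t : ℕ) : ℕ := (jumpSet s t).card

noncomputable def jumpTime [DecidableEq E] (s : ℕ → E) (t : ℕ) (k : ℕ) : ℕ :=
  ((0 : ℕ) :: (jumpSet s t).sort (· ≤ ·)).getD k 0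

/-- `l(t) = t - τ_{N(t)}`. -/
noncomputable def holdDur [DecidableEq E] (s : ℕ → E) (t : ℕ) : ℕ :=
  t - jumpTime s t (numJumps s t)

/-- `F^i((a,∞)) = ∑_{u > a} F^i({u})`. -/
noncomputable def survF (F : E → ℕ+ → ENNReal) (i : E) (a : ℕ) : ENNReal :=
  ∑' u : ℕ+, if a < (u : ℕ) then F i u else 0


namespace SMaux

lemma tau_zero (ω : ℕ → E × ℕ+) : tauProc ω 0 = 0 := by simp [tauProc]

lemma tau_succ (ω : ℕ → E × ℕ+) (n : ℕ) :
    tauProc ω (n + 1) = tauProc ω n + ((ω n).2 : ℕ) := Finset.sum_range_succ _ n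

lemma tau_strictMono (ω : ℕ → E × ℕ+) : StrictMono (tauProc ω) := by
  apply strictMono_nat_of_lt_succ
  intro n
  rw [tau_succ]
  have := (ω n).2.pos
  omega

lemma le_tau (ω : ℕ → E × ℕ+) (n : ℕ) : n ≤ tauProc ω n := by
  induction n with
  | zero => simp [tau_zero]
  | succ n ih => rw [tau_succ]; have := (ω n).2.pos; omega

lemma NProc_eq {ω : ℕ → E × ℕ+} {t n : ℕ} (h1 : tauProc ω n ≤ t)
    (h2 : t < tauProc ω (n + 1)) : NProc ω t = n := by
  have hIcc : (Finset.Icc 1 t).filter (fun k => tauProc ω k ≤ t) = Finset.Icc 1 n := by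
    ext k
    simp only [Finset.mem_filter, Finset.mem_Icc]
    constructor
    · rintro ⟨⟨hk1, hkt⟩, hτ⟩
      refine ⟨hk1, ?_⟩
      by_contra hkn
      have : n + 1 ≤ k := by omega
      exact absurd hτ (by have := (tau_strictMono ω).monotone this; omega)
    · rintro ⟨hk1, hkn⟩
      have hτ : tauProc ω k ≤ tauProc ω n := (tau_strictMono ω).monotone hkn
      have := le_tau ω k
      exact ⟨⟨hk1, by omega⟩, by omega⟩
  rw [NProc, hIcc, Nat.card_Icc]; omega

lemma NProc_spec (ω : ℕ → E × ℕ+) (t : ℕ) :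
    tauProc ω (NProc ω t) ≤ t ∧ t < tauProc ω (NProc ω t + 1) := by
  classical
  set n := Nat.findGreatest (fun k => tauProc ω k ≤ t) t with hn
  have h1 : tauProc ω n ≤ t :=
    Nat.findGreatest_spec (P := fun k => tauProc ω k ≤ t) (Nat.zero_le t) (by simp [tau_zero])
  have h2 : t < tauProc ω (n + 1) := by
    by_cases h : n + 1 ≤ t
    · have h3 := Nat.findGreatest_is_greatest (P := fun k => tauProc ω k ≤ t) (k := n + 1) (n := t)
        (by omega) h
      simp only [not_le] at h3
      exact h3
    · have := le_tau ω (n + 1); omega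
  rw [NProc_eq h1 h2]
  exact ⟨h1, h2⟩

section Jumps
variable [DecidableEq E] (s : ℕ → E) (t : ℕ)

lemma numJumps_le : numJumps s t ≤ t := by
  have h1 : numJumps s t ≤ (Finset.Icc 1 t).card := Finset.card_filter_le _ _
  simpa [Nat.card_Icc] using h1

lemma jumpTime_zero : jumpTime s t 0 = 0 := rfl

lemma length_sort_jump : ((jumpSet s t).sort (· ≤ ·)).length = numJumps s t :=
  Finset.length_sort _

lemma jumpTime_succ_eq (k : ℕ) (hk : k < numJumps s t) :
    jumpTime s t (k + 1) = ((jumpSet s t).sort (· ≤ ·))[k]'(by rw [length_sort_jump]; exact hk) := by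
  rw [jumpTime, List.getD_cons_succ]
  exact List.getD_eq_getElem _ _ _

lemma jumpTime_mem {k : ℕ} (h1 : 1 ≤ k) (h2 : k ≤ numJumps s t) :
    jumpTime s t k ∈ jumpSet s t := by
  obtain ⟨k, rfl⟩ := Nat.exists_eq_add_of_le h1
  rw [add_comm] at *
  rw [jumpTime_succ_eq s t k (by omega)]
  rw [← Finset.mem_sort (α := ℕ) (· ≤ ·)]
  exact List.getElem_mem _

lemma jumpTime_pos {k : ℕ} (h1 : 1 ≤ k) (h2 : k ≤ numJumps s t) : 1 ≤ jumpTime s t k := by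
  have := jumpTime_mem s t h1 h2
  rw [jumpSet, Finset.mem_filter, Finset.mem_Icc] at this
  omega

lemma jumpTime_le_t {k : ℕ} (h2 : k ≤ numJumps s t) : jumpTime s t k ≤ t := by
  rcases Nat.eq_zero_or_pos k with rfl | hk
  · simp [jumpTime_zero]
  · have := jumpTime_mem s t hk h2
    rw [jumpSet, Finset.mem_filter, Finset.mem_Icc] at this
    omega

lemma jumpTime_lt {j k : ℕ} (hjk : j < k) (hk : k ≤ numJumps s t) :
    jumpTime s t j < jumpTime s t k := by
  rcases Nat.eq_zero_or_pos j with rfl | hj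
  · rw [jumpTime_zero]
    exact jumpTime_pos s t (by omega) hk
  · obtain ⟨j, rfl⟩ := Nat.exists_eq_add_of_le hj
    obtain ⟨k, rfl⟩ := Nat.exists_eq_add_of_le (show 1 ≤ k by omega)
    rw [add_comm 1 j, add_comm 1 k] at *
    rw [jumpTime_succ_eq s t j (by omega), jumpTime_succ_eq s t k (by omega)]
    have hs := Finset.sortedLT_sort (jumpSet s t)
    exact hs.getElem_lt_getElem_of_lt (by omega)

lemma jumpTime_mono {j k : ℕ} (hjk : j ≤ k) (hk : k ≤ numJumps s t) :
    jumpTime s t j ≤ jumpTime s t k := by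
  rcases eq_or_lt_of_le hjk with rfl | h
  · exact le_refl _
  · exact (jumpTime_lt s t h hk).le

lemma exists_jumpTime {r : ℕ} (h : r ∈ jumpSet s t) :
    ∃ k, 1 ≤ k ∧ k ≤ numJumps s t ∧ jumpTime s t k = r := by
  rw [← Finset.mem_sort (α := ℕ) (· ≤ ·), List.mem_iff_getElem] at h
  obtain ⟨i, hi, hir⟩ := h
  rw [length_sort_jump] at hi
  exact ⟨i + 1, by omega, by omega, by rw [jumpTime_succ_eq s t i hi]; exact hir⟩

lemma not_jump {r : ℕ} (h1 : 1 ≤ r) (h2 : r ≤ t) (h : r ∉ jumpSet s t) : s r = s (r - 1) := by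
  rw [jumpSet, Finset.mem_filter, Finset.mem_Icc] at h
  push_neg at h
  exact h ⟨h1, h2⟩

lemma path_const_aux {a : ℕ} : ∀ {r : ℕ}, a ≤ r → r ≤ t →
    (∀ q, a < q → q ≤ r → q ∉ jumpSet s t) → s r = s a := by
  intro r
  induction r with
  | zero => intro har _ _; rw [Nat.le_zero.mp har]
  | succ r ih =>
    intro har hrt hnj
    rcases eq_or_lt_of_le har with rfl | h
    · rfl
    · have hj := hnj (r + 1) h (le_refl _)
      have heq : s (r + 1) = s r := by
        have := not_jump s t (r := r + 1) (by omega) hrt hj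
        simpa using this
      rw [heq]
      exact ih (by omega) (by omega) (fun q hq1 hq2 => hnj q hq1 (by omega))

lemma path_const {k r : ℕ} (hk : k ≤ numJumps s t) (h1 : jumpTime s t k ≤ r) (h2 : r ≤ t)
    (h3 : k = numJumps s t ∨ r < jumpTime s t (k + 1)) : s r = s (jumpTime s t k) := by
  apply path_const_aux s t h1 h2
  intro q hq1 hq2 hq
  obtain ⟨p, hp1, hp2, hp3⟩ := exists_jumpTime s t hq
  rcases le_or_gt p k with hpk | hpk
  · have := jumpTime_mono s t hpk hk; omega
  · rcases h3 with rfl | h3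
    · omega
    · have : jumpTime s t (k + 1) ≤ jumpTime s t p := jumpTime_mono s t (by omega) hp2
      omega

end Jumps
end SMaux

namespace SMaux
section Struct
variable [DecidableEq E]

lemma tau_eq_jumpTime (ω : ℕ → E × ℕ+) (s : ℕ → E) (t : ℕ)
    (hT : ∀ k < numJumps s t, ((ω k).2 : ℕ) = jumpTime s t (k + 1) - jumpTime s t k) :
    ∀ k, k ≤ numJumps s t → tauProc ω k = jumpTime s t k := by
  intro k
  induction k with
  | zero => intro _; simp [tau_zero, jumpTime_zero]
  | succ k ih =>
    intro hk
    rw [tau_succ, ih (by omega), hT k (by omega)]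
    have := jumpTime_lt s t (show k < k + 1 by omega) hk
    omega

/-- Under the Match conditions, the semi-Markov path agrees with `s` on `[0,t]`,
and we identify `NProc ω r` for `r ≤ t`. -/
lemma match_NProc (ω : ℕ → E × ℕ+) (s : ℕ → E) (t : ℕ)
    (hT : ∀ k < numJumps s t, ((ω k).2 : ℕ) = jumpTime s t (k + 1) - jumpTime s t k)
    (h3 : t < tauProc ω (numJumps s t + 1)) {r : ℕ} (hr : r ≤ t) :
    NProc ω r = Nat.findGreatest (fun k => jumpTime s t k ≤ r) (numJumps s t) ∧
      jumpTime s t (Nat.findGreatest (fun k => jumpTime s t k ≤ r) (numJumps s t)) ≤ r ∧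
      (Nat.findGreatest (fun k => jumpTime s t k ≤ r) (numJumps s t) = numJumps s t ∨
        (Nat.findGreatest (fun k => jumpTime s t k ≤ r) (numJumps s t) + 1 ≤ numJumps s t ∧
          r < jumpTime s t (Nat.findGreatest (fun k => jumpTime s t k ≤ r) (numJumps s t) + 1))) := by
  classical
  set m := numJumps s t with hm
  set k := Nat.findGreatest (fun k => jumpTime s t k ≤ r) m with hkdef
  have hkm : k ≤ m := Nat.findGreatest_le m
  have hk1 : jumpTime s t k ≤ r :=
    Nat.findGreatest_spec (P := fun k => jumpTime s t k ≤ r) (Nat.zero_le m)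
      (by simp [jumpTime_zero])
  have htail : k = m ∨ (k + 1 ≤ m ∧ r < jumpTime s t (k + 1)) := by
    rcases eq_or_lt_of_le hkm with h | h
    · exact Or.inl h
    · refine Or.inr ⟨by omega, ?_⟩
      have := Nat.findGreatest_is_greatest (P := fun k => jumpTime s t k ≤ r) (k := k + 1)
        (n := m) (Nat.lt_succ_self k) (by omega)
      simpa using this
  have hτk : tauProc ω k = jumpTime s t k := tau_eq_jumpTime ω s t hT k hkm
  have hNr : NProc ω r = k := by
    apply NProc_eq (by omega)
    rcases htail with h | ⟨hk1m, h⟩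
    · have : tauProc ω (k + 1) = tauProc ω (m + 1) := by rw [h]
      omega
    · have := tau_eq_jumpTime ω s t hT (k + 1) hk1m
      omega
  exact ⟨hNr, hk1, htail⟩

lemma match_imp_path (ω : ℕ → E × ℕ+) (s : ℕ → E) (t : ℕ)
    (hL : ∀ k ≤ numJumps s t, (ω k).1 = s (jumpTime s t k))
    (hT : ∀ k < numJumps s t, ((ω k).2 : ℕ) = jumpTime s t (k + 1) - jumpTime s t k)
    (h3 : t < tauProc ω (numJumps s t + 1)) :
    ∀ r ≤ t, SProc ω r = s r := by
  intro r hr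
  obtain ⟨hNr, hk1, htail⟩ := match_NProc ω s t hT h3 hr
  set k := Nat.findGreatest (fun k => jumpTime s t k ≤ r) (numJumps s t)
  have hkm : k ≤ numJumps s t := Nat.findGreatest_le _
  rw [SProc, hNr, hL k hkm]
  refine (path_const s t hkm hk1 hr ?_).symm
  rcases htail with h | ⟨_, h⟩
  · exact Or.inl h
  · exact Or.inr h

end Struct
end SMaux

namespace SMaux
section Struct2
variable [DecidableEq E] (ω : ℕ → E × ℕ+) (s : ℕ → E) (t : ℕ)

lemma match_NProc_t
    (hT : ∀ k < numJumps s t, ((ω k).2 : ℕ) = jumpTime s t (k + 1) - jumpTime s t k)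
    (h3 : t < tauProc ω (numJumps s t + 1)) : NProc ω t = numJumps s t := by
  apply NProc_eq ?_ h3
  rw [tau_eq_jumpTime ω s t hT _ le_rfl]
  exact jumpTime_le_t s t le_rfl

lemma match_SProc_succ_of_gt
    (hT : ∀ k < numJumps s t, ((ω k).2 : ℕ) = jumpTime s t (k + 1) - jumpTime s t k)
    (h3' : t + 1 < tauProc ω (numJumps s t + 1)) :
    SProc ω (t + 1) = (ω (numJumps s t)).1 := by
  rw [SProc, NProc_eq ?_ h3']
  rw [tau_eq_jumpTime ω s t hT _ le_rfl]
  have := jumpTime_le_t s t (le_refl (numJumps s t))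
  omega

lemma match_SProc_succ_of_eq (h3'' : tauProc ω (numJumps s t + 1) = t + 1) :
    SProc ω (t + 1) = (ω (numJumps s t + 1)).1 := by
  rw [SProc, NProc_eq (le_of_eq h3'') ?_]
  rw [tau_succ]
  have := (ω (numJumps s t + 1)).2.pos
  omega

lemma jump_eq_image (hnr : ∀ k ≤ t, (ω (k + 1)).1 ≠ (ω k).1)
    (hS : ∀ r ≤ t, SProc ω r = s r) :
    jumpSet s t = (Finset.Icc 1 (NProc ω t)).image (tauProc ω) := by
  have hNt := NProc_spec ω t
  have hNt_le : NProc ω t ≤ t := le_trans (le_tau ω _) hNt.1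
  ext r
  simp only [Finset.mem_image, Finset.mem_Icc, jumpSet, Finset.mem_filter]
  constructor
  · rintro ⟨⟨hr1, hrt⟩, hjump⟩
    have hspec := NProc_spec ω r
    set n := NProc ω r with hn
    have hτr : tauProc ω n = r := by
      rcases eq_or_lt_of_le hspec.1 with h | h
      · exact h
      · exfalso
        have hNr1 : NProc ω (r - 1) = n := NProc_eq (by omega) (by omega)
        have : s r = s (r - 1) := by
          rw [← hS r hrt, ← hS (r - 1) (by omega), SProc, SProc, hNr1]
        exact hjump this
    have hn1 : 1 ≤ n := by
      rcases Nat.eq_zero_or_pos n with h0 | h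
      · rw [h0, tau_zero] at hτr; omega
      · exact h
    have hnN : n ≤ NProc ω t := by
      by_contra hc
      have : tauProc ω (NProc ω t + 1) ≤ tauProc ω n := (tau_strictMono ω).monotone (by omega)
      omega
    exact ⟨n, ⟨hn1, hnN⟩, hτr⟩
  · rintro ⟨n, ⟨hn1, hnN⟩, rfl⟩
    have hτn_le : tauProc ω n ≤ t := le_trans ((tau_strictMono ω).monotone hnN) hNt.1
    have hτ1 : 1 ≤ tauProc ω n := le_trans hn1 (le_tau ω n)
    refine ⟨⟨hτ1, hτn_le⟩, ?_⟩
    have hNn : NProc ω (tauProc ω n) = n := NProc_eq le_rfl (tau_strictMono ω (Nat.lt_succ_self n))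
    have hNn1 : NProc ω (tauProc ω n - 1) = n - 1 := by
      apply NProc_eq
      · have := tau_strictMono ω (show n - 1 < n by omega); omega
      · have heq : n - 1 + 1 = n := by omega
        rw [heq]; omega
    rw [← hS _ hτn_le, ← hS _ (by omega), SProc, SProc, hNn, hNn1]
    have hne := hnr (n - 1) (by omega)
    have heq : n - 1 + 1 = n := by omega
    rw [heq] at hne
    exact hne

lemma numJumps_eq_NProc (hnr : ∀ k ≤ t, (ω (k + 1)).1 ≠ (ω k).1)
    (hS : ∀ r ≤ t, SProc ω r = s r) : numJumps s t = NProc ω t := by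
  rw [numJumps, jump_eq_image ω s t hnr hS,
    Finset.card_image_of_injective _ (tau_strictMono ω).injective, Nat.card_Icc]
  omega

lemma jumpTime_eq_tau (hnr : ∀ k ≤ t, (ω (k + 1)).1 ≠ (ω k).1)
    (hS : ∀ r ≤ t, SProc ω r = s r) :
    ∀ k ≤ numJumps s t, jumpTime s t k = tauProc ω k := by
  have hm := numJumps_eq_NProc ω s t hnr hS
  have hlist : ((0 : ℕ) :: (jumpSet s t).sort (· ≤ ·)) =
      (List.range (numJumps s t + 1)).map (tauProc ω) := by
    apply List.Perm.eq_of_pairwise' (r := (· ≤ ·)) ?_ ?_ ?_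
    rotate_right 1
    · apply List.perm_of_nodup_nodup_toFinset_eq
      · rw [List.nodup_cons]
        refine ⟨?_, Finset.sort_nodup _ _⟩
        rw [Finset.mem_sort (α := ℕ) (· ≤ ·)]
        intro h
        rw [jumpSet, Finset.mem_filter, Finset.mem_Icc] at h
        omega
      · exact List.nodup_range.map (tau_strictMono ω).injective
      · rw [List.toFinset_cons, Finset.sort_toFinset, jump_eq_image ω s t hnr hS, ← hm]
        ext x
        simp only [Finset.mem_insert, Finset.mem_image, Finset.mem_Icc, List.mem_toFinset,
          List.mem_map, List.mem_range]
        constructor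
        · rintro (rfl | ⟨n, ⟨hn1, hn2⟩, rfl⟩)
          · exact ⟨0, by omega, tau_zero ω⟩
          · exact ⟨n, by omega, rfl⟩
        · rintro ⟨n, hn, rfl⟩
          rcases Nat.eq_zero_or_pos n with rfl | hn1
          · exact Or.inl (tau_zero ω)
          · exact Or.inr ⟨n, ⟨hn1, by omega⟩, rfl⟩
    · rw [List.pairwise_cons]
      exact ⟨fun b _ => Nat.zero_le b, Finset.pairwise_sort _ _⟩
    · refine List.Pairwise.map _ ?_ List.pairwise_lt_range
      intro a b hab
      exact ((tau_strictMono ω) hab).le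
  intro k hk
  rw [jumpTime, hlist, List.getD_eq_getElem _ _ (by simp; omega)]
  simp

lemma path_imp_match (hnr : ∀ k ≤ t, (ω (k + 1)).1 ≠ (ω k).1)
    (hS : ∀ r ≤ t, SProc ω r = s r) :
    (∀ k ≤ numJumps s t, (ω k).1 = s (jumpTime s t k)) ∧
    (∀ k < numJumps s t, ((ω k).2 : ℕ) = jumpTime s t (k + 1) - jumpTime s t k) ∧
    t < tauProc ω (numJumps s t + 1) := by
  have hm := numJumps_eq_NProc ω s t hnr hS
  have hu := jumpTime_eq_tau ω s t hnr hS
  have hNt := NProc_spec ω t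
  refine ⟨?_, ?_, ?_⟩
  · intro k hk
    rw [hu k hk]
    have hτk : tauProc ω k ≤ t := by
      calc tauProc ω k ≤ tauProc ω (NProc ω t) := (tau_strictMono ω).monotone (by omega)
        _ ≤ t := hNt.1
    rw [← hS _ hτk, SProc, NProc_eq le_rfl (tau_strictMono ω (Nat.lt_succ_self k))]
  · intro k hk
    rw [hu k (by omega), hu (k + 1) (by omega), tau_succ]
    omega
  · rw [hm]; exact hNt.2

end Struct2
end SMaux

namespace SMaux
section Meas
variable [Countable E] [Nonempty E] [DecidableEq E] [MeasurableSpace E] [MeasurableSingletonClass E]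

set_option linter.unusedSectionVars false

instance : MeasurableSingletonClass ℕ+ := ⟨fun _ => MeasurableSpace.measurableSet_top⟩

def hmuSet (n : ℕ) (l : ℕ → E) (τv : ℕ → ℕ+) : Set (ℕ → E × ℕ+) :=
  {ω | (∀ k ≤ n, (ω k).1 = l k) ∧ (∀ k < n, (ω k).2 = τv k)}

def cylSet (n : ℕ) (c : ℕ → E × ℕ+) : Set (ℕ → E × ℕ+) := {ω | ∀ k ≤ n, ω k = c k}

lemma measurable_fst_coord (k : ℕ) : Measurable (fun ω : ℕ → E × ℕ+ => (ω k).1) :=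
  measurable_fst.comp (measurable_pi_apply k)

lemma measurable_snd_coord (k : ℕ) : Measurable (fun ω : ℕ → E × ℕ+ => (ω k).2) :=
  measurable_snd.comp (measurable_pi_apply k)

lemma measurable_hmuSet (n : ℕ) (l : ℕ → E) (τv : ℕ → ℕ+) : MeasurableSet (hmuSet n l τv) := by
  have : hmuSet n l τv =
      (⋂ k, ⋂ (_ : k ≤ n), (fun ω : ℕ → E × ℕ+ => (ω k).1) ⁻¹' {l k}) ∩
      (⋂ k, ⋂ (_ : k < n), (fun ω : ℕ → E × ℕ+ => (ω k).2) ⁻¹' {τv k}) := by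
    ext ω
    simp [hmuSet, Set.mem_iInter]
  rw [this]
  exact MeasurableSet.inter
    (MeasurableSet.iInter fun k => MeasurableSet.iInter fun _ =>
      (measurable_fst_coord k) (measurableSet_singleton _))
    (MeasurableSet.iInter fun k => MeasurableSet.iInter fun _ =>
      (measurable_snd_coord k) (measurableSet_singleton _))

lemma measurable_cylSet (n : ℕ) (c : ℕ → E × ℕ+) : MeasurableSet (cylSet n c) := by
  have : cylSet n c = ⋂ k, ⋂ (_ : k ≤ n), (fun ω : ℕ → E × ℕ+ => ω k) ⁻¹' {c k} := by
    ext ω; simp [cylSet, Set.mem_iInter]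
  rw [this]
  exact MeasurableSet.iInter fun k => MeasurableSet.iInter fun _ =>
    (measurable_pi_apply k) (measurableSet_singleton _)

variable {P : E → E → ENNReal} {F : E → ℕ+ → ENNReal} {l₀ : E} {μ : Measure (ℕ → E × ℕ+)}

lemma cyl_measure (hProw : ∀ i, ∑' j, P i j = 1)
    (hμ : ∀ (n : ℕ) (l : ℕ → E) (τv : ℕ → ℕ+),
      μ (hmuSet n l τv) =
        (if l 0 = l₀ then 1 else 0) *
          ∏ k ∈ Finset.range n, (P (l k) (l (k + 1)) * F (l k) (τv k)))
    (n : ℕ) (c : ℕ → E × ℕ+) :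
    μ (cylSet n c) = (if (c 0).1 = l₀ then 1 else 0) *
      (∏ k ∈ Finset.range n, P ((c k).1) ((c (k + 1)).1)) *
      ∏ k ∈ Finset.range (n + 1), F ((c k).1) ((c k).2) := by
  have hdecomp : cylSet n c =
      ⋃ j : E, hmuSet (n + 1) (fun k => if k ≤ n then (c k).1 else j) (fun k => (c k).2) := by
    ext ω
    simp only [cylSet, hmuSet, Set.mem_iUnion, Set.mem_setOf_eq]
    constructor
    · intro h
      refine ⟨(ω (n + 1)).1, fun k hk => ?_, fun k hk => ?_⟩
      · rcases Nat.lt_or_ge k (n + 1) with h1 | h1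
        · rw [if_pos (by omega), h k (by omega)]
        · have : k = n + 1 := by omega
          subst this
          rw [if_neg (by omega)]
      · rw [h k (by omega)]
    · rintro ⟨j, h1, h2⟩ k hk
      have hf := h1 k (by omega)
      rw [if_pos hk] at hf
      exact Prod.ext hf (h2 k (by omega))
  have hdisj : Pairwise (Function.onFun Disjoint
      (fun j : E => hmuSet (n + 1) (fun k => if k ≤ n then (c k).1 else j) (fun k => (c k).2))) := by
    intro i j hij
    rw [Function.onFun, Set.disjoint_left]
    rintro ω ⟨h1, -⟩ ⟨h2, -⟩
    have e1 := h1 (n + 1) (le_refl _)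
    have e2 := h2 (n + 1) (le_refl _)
    simp only [if_neg (show ¬ n + 1 ≤ n by omega)] at e1 e2
    exact hij (e1 ▸ e2)
  rw [hdecomp, measure_iUnion hdisj (fun j => measurable_hmuSet _ _ _)]
  have hval : ∀ j : E,
      μ (hmuSet (n + 1) (fun k => if k ≤ n then (c k).1 else j) (fun k => (c k).2)) =
      ((if (c 0).1 = l₀ then 1 else 0) *
        (∏ k ∈ Finset.range n, P ((c k).1) ((c (k + 1)).1)) *
        (∏ k ∈ Finset.range (n + 1), F ((c k).1) ((c k).2))) * P ((c n).1) j := by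
    intro j
    rw [hμ]
    simp only [if_pos (Nat.zero_le n)]
    rw [Finset.prod_range_succ]
    have hcong : ∀ k ∈ Finset.range n,
        P (if k ≤ n then (c k).1 else j) (if k + 1 ≤ n then (c (k + 1)).1 else j) *
          F (if k ≤ n then (c k).1 else j) ((c k).2) =
        P ((c k).1) ((c (k + 1)).1) * F ((c k).1) ((c k).2) := by
      intro k hk
      rw [Finset.mem_range] at hk
      rw [if_pos (by omega), if_pos (by omega)]
    rw [Finset.prod_congr rfl hcong, Finset.prod_mul_distrib]
    simp only [if_pos (le_refl n), if_neg (show ¬ n + 1 ≤ n by omega)]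
    rw [Finset.prod_range_succ (fun k => F ((c k).1) ((c k).2))]
    ring
  rw [tsum_congr hval, ENNReal.tsum_mul_left, hProw, mul_one]

end Meas
end SMaux

namespace SMaux
section Meas2
variable [Countable E] [Nonempty E] [DecidableEq E] [MeasurableSpace E] [MeasurableSingletonClass E]
variable {P : E → E → ENNReal} {F : E → ℕ+ → ENNReal} {l₀ : E} {μ : Measure (ℕ → E × ℕ+)}

set_option linter.unusedSectionVars false

lemma survF_le_one (F : E → ℕ+ → ENNReal) (hFpmf : ∀ i, ∑' u, F i u = 1) (i : E) (a : ℕ) :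
    survF F i a ≤ 1 := by
  rw [← hFpmf i]
  exact ENNReal.tsum_le_tsum fun u => by
    split_ifs with h
    · exact le_rfl
    · exact zero_le

lemma tail_measure (hProw : ∀ i, ∑' j, P i j = 1)
    (hμ : ∀ (n : ℕ) (l : ℕ → E) (τv : ℕ → ℕ+),
      μ (hmuSet n l τv) =
        (if l 0 = l₀ then 1 else 0) *
          ∏ k ∈ Finset.range n, (P (l k) (l (k + 1)) * F (l k) (τv k)))
    (m : ℕ) (v : ℕ → E) (g : ℕ → ℕ+) (a : ℕ) :
    μ {ω | (∀ k ≤ m, (ω k).1 = v k) ∧ (∀ k < m, (ω k).2 = g k) ∧ a < ((ω m).2 : ℕ)} =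
      (if v 0 = l₀ then 1 else 0) * (∏ k ∈ Finset.range m, P (v k) (v (k + 1))) *
        (∏ k ∈ Finset.range m, F (v k) (g k)) * survF F (v m) a := by
  have hdecomp : {ω : ℕ → E × ℕ+ | (∀ k ≤ m, (ω k).1 = v k) ∧ (∀ k < m, (ω k).2 = g k) ∧
      a < ((ω m).2 : ℕ)} =
      ⋃ d : ℕ+, if a < (d : ℕ) then
        cylSet m (fun k => (v k, if k = m then d else g k)) else ∅ := by
    ext ω
    simp only [Set.mem_iUnion, Set.mem_setOf_eq]
    constructor
    · rintro ⟨h1, h2, h3⟩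
      refine ⟨(ω m).2, ?_⟩
      rw [if_pos h3]
      intro k hk
      rcases eq_or_lt_of_le hk with rfl | hlt
      · exact Prod.ext (h1 k le_rfl) (by simp)
      · exact Prod.ext (h1 k hk) (by
          have := h2 k hlt
          simp only [if_neg (show k ≠ m by omega)]
          exact this)
    · rintro ⟨d, hd⟩
      by_cases h : a < (d : ℕ)
      · rw [if_pos h] at hd
        have hm := hd m le_rfl
        refine ⟨fun k hk => by rw [hd k hk], fun k hk => ?_, ?_⟩
        · rw [hd k (by omega)]
          simp [if_neg (show k ≠ m by omega)]
        · rw [hm]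
          simpa using h
      · rw [if_neg h] at hd
        exact absurd hd (Set.notMem_empty ω)
  have hdisj : Pairwise (Function.onFun Disjoint (fun d : ℕ+ => if a < (d : ℕ) then
      cylSet m (fun k => (v k, if k = m then d else g k)) else ∅)) := by
    intro d d' hdd
    rw [Function.onFun]
    split_ifs with h1 h2 h2
    · rw [Set.disjoint_left]
      intro ω hω hω'
      have e1 := hω m le_rfl
      have e2 := hω' m le_rfl
      rw [e1] at e2
      have := congrArg Prod.snd e2
      simp only [if_pos rfl] at this
      exact hdd this
    all_goals simp
  rw [hdecomp, measure_iUnion hdisj (fun d => by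
    split_ifs
    · exact measurable_cylSet _ _
    · exact MeasurableSet.empty)]
  have hval : ∀ d : ℕ+, μ (if a < (d : ℕ) then
      cylSet m (fun k => (v k, if k = m then d else g k)) else ∅) =
      ((if v 0 = l₀ then 1 else 0) * (∏ k ∈ Finset.range m, P (v k) (v (k + 1))) *
        (∏ k ∈ Finset.range m, F (v k) (g k))) * (if a < (d : ℕ) then F (v m) d else 0) := by
    intro d
    by_cases h : a < (d : ℕ)
    · rw [if_pos h, if_pos h, cyl_measure hProw hμ]
      simp only
      rw [Finset.prod_range_succ (fun k => F (v k) (if k = m then d else g k))]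
      have hcong : ∀ k ∈ Finset.range m,
          F (v k) (if k = m then d else g k) = F (v k) (g k) := by
        intro k hk
        rw [Finset.mem_range] at hk
        rw [if_neg (by omega)]
      rw [Finset.prod_congr rfl hcong, if_pos rfl]
      ring
    · rw [if_neg h, if_neg h, measure_empty, mul_zero]
  rw [tsum_congr hval, ENNReal.tsum_mul_left, survF]

lemma repeat_null (hPii : ∀ i, P i i = 0)
    (hμ : ∀ (n : ℕ) (l : ℕ → E) (τv : ℕ → ℕ+),
      μ (hmuSet n l τv) =
        (if l 0 = l₀ then 1 else 0) *
          ∏ k ∈ Finset.range n, (P (l k) (l (k + 1)) * F (l k) (τv k)))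
    (k : ℕ) : μ {ω : ℕ → E × ℕ+ | (ω (k + 1)).1 = (ω k).1} = 0 := by
  classical
  have hcover : {ω : ℕ → E × ℕ+ | (ω (k + 1)).1 = (ω k).1} ⊆
      ⋃ c : Fin (k + 2) → E × ℕ+,
        if (c (Fin.last (k + 1))).1 = (c ⟨k, by omega⟩).1 then
          hmuSet (k + 1) (fun i => if h : i < k + 2 then (c ⟨i, h⟩).1 else (c 0).1)
            (fun i => if h : i < k + 2 then (c ⟨i, h⟩).2 else (c 0).2) else ∅ := by
    intro ω hω
    rw [Set.mem_iUnion]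
    refine ⟨fun i => ω i, ?_⟩
    rw [if_pos (by simpa [Fin.last] using hω)]
    constructor
    · intro i hi
      simp only [dif_pos (show i < k + 2 by omega)]
    · intro i hi
      simp only [dif_pos (show i < k + 2 by omega)]
  refine le_antisymm (le_trans (measure_mono hcover) ?_) zero_le
  refine le_trans (measure_iUnion_le _) ?_
  have hzero : ∀ c : Fin (k + 2) → E × ℕ+,
      μ (if (c (Fin.last (k + 1))).1 = (c ⟨k, by omega⟩).1 then
          hmuSet (k + 1) (fun i => if h : i < k + 2 then (c ⟨i, h⟩).1 else (c 0).1)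
            (fun i => if h : i < k + 2 then (c ⟨i, h⟩).2 else (c 0).2) else ∅) = 0 := by
    intro c
    split_ifs with h
    · rw [hμ]
      have : (∏ i ∈ Finset.range (k + 1),
          (P (if h : i < k + 2 then (c ⟨i, h⟩).1 else (c 0).1)
            (if h : i + 1 < k + 2 then (c ⟨i + 1, h⟩).1 else (c 0).1) *
          F (if h : i < k + 2 then (c ⟨i, h⟩).1 else (c 0).1)
            (if h : i < k + 2 then (c ⟨i, h⟩).2 else (c 0).2))) = 0 := by
        apply Finset.prod_eq_zero (Finset.self_mem_range_succ k)
        rw [dif_pos (by omega : k < k + 2), dif_pos (by omega : k + 1 < k + 2)]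
        have hh : (c ⟨k + 1, by omega⟩).1 = (c ⟨k, by omega⟩).1 := by
          simpa [Fin.last] using h
        rw [hh, hPii, zero_mul]
      simp only [this, mul_zero]
    · simp
  rw [tsum_congr hzero]
  simp

end Meas2
end SMaux

noncomputable def vFn [DecidableEq E] (s : ℕ → E) (t : ℕ) (k : ℕ) : E := s (jumpTime s t k)

noncomputable def gFn [DecidableEq E] (s : ℕ → E) (t : ℕ) (k : ℕ) : ℕ+ :=
  (jumpTime s t (k + 1) - jumpTime s t k).toPNat'

open SMaux in
/-- For every `t ≥ 0` and every path `s_{0:t}` with `s 0 = l₀` and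
`F^{s_t}((l(t),∞)) > 0`:
(i)  `μ(S_{0:t} = s_{0:t}, S_{t+1} = s_t)
       = μ(S_{0:t} = s_{0:t}) ⬝ F^{s_t}((x(t),∞)) / F^{s_t}((l(t),∞))`;
(ii) for `j ≠ s_t`, `μ(S_{0:t} = s_{0:t}, S_{t+1} = j)
       = μ(S_{0:t} = s_{0:t}) ⬝ [F^{s_t}({x(t)}) / F^{s_t}((l(t),∞))] ⬝ P^{s_t, j}`,
where `x(t) = l(t) + 1`.  In particular the one-step predictive law of `S` given its past
depends only on the current state and the current holding duration. -/
theorem semiMarkov_one_step_predictive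
    [Nonempty E] [Countable E] [DecidableEq E]
    [MeasurableSpace E] [MeasurableSingletonClass E]
    (P : E → E → ENNReal) (hProw : ∀ i, ∑' j, P i j = 1) (hPii : ∀ i, P i i = 0)
    (F : E → ℕ+ → ENNReal) (hFpmf : ∀ i, ∑' u, F i u = 1)
    (l₀ : E) (μ : Measure (ℕ → E × ℕ+)) [IsProbabilityMeasure μ]
    (hμ : ∀ (n : ℕ) (l : ℕ → E) (τv : ℕ → ℕ+),
      μ {ω | (∀ k ≤ n, (ω k).1 = l k) ∧ (∀ k < n, (ω k).2 = τv k)} =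
        (if l 0 = l₀ then 1 else 0) *
          ∏ k ∈ Finset.range n, (P (l k) (l (k + 1)) * F (l k) (τv k)))
    (t : ℕ) (s : ℕ → E) (hs0 : s 0 = l₀)
    (hpos : 0 < survF F (s t) (holdDur s t)) :
    (μ {ω | (∀ r ≤ t, SProc ω r = s r) ∧ SProc ω (t + 1) = s t} =
      μ {ω | ∀ r ≤ t, SProc ω r = s r} *
        survF F (s t) (holdDur s t + 1) / survF F (s t) (holdDur s t)) ∧
    (∀ j : E, j ≠ s t →
      μ {ω | (∀ r ≤ t, SProc ω r = s r) ∧ SProc ω (t + 1) = j} =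
        μ {ω | ∀ r ≤ t, SProc ω r = s r} *
          (F (s t) (holdDur s t).succPNat / survF F (s t) (holdDur s t)) *
          P (s t) j) := by
  classical
  have hμ' : ∀ (n : ℕ) (l : ℕ → E) (τv : ℕ → ℕ+),
      μ (hmuSet n l τv) =
        (if l 0 = l₀ then 1 else 0) *
          ∏ k ∈ Finset.range n, (P (l k) (l (k + 1)) * F (l k) (τv k)) := hμ
  have hmt : numJumps s t ≤ t := numJumps_le s t
  have humt : jumpTime s t (numJumps s t) ≤ t := jumpTime_le_t s t le_rfl
  have hgap : ∀ k, k < numJumps s t → jumpTime s t k < jumpTime s t (k + 1) :=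
    fun k hk => jumpTime_lt s t (show k < k + 1 by omega) hk
  have hgcoe : ∀ k, k < numJumps s t →
      ((gFn s t k : ℕ)) = jumpTime s t (k + 1) - jumpTime s t k := fun k hk =>
    PNat.toPNat'_coe (by have := hgap k hk; omega)
  have hvm : vFn s t (numJumps s t) = s t :=
    (path_const s t le_rfl humt le_rfl (Or.inl rfl)).symm
  have hv0 : vFn s t 0 = l₀ := by
    rw [vFn, jumpTime_zero, hs0]
  -- the null set of consecutive repeats
  set R : Set (ℕ → E × ℕ+) := ⋃ k : Fin (t + 1), {ω | (ω ((k : ℕ) + 1)).1 = (ω (k : ℕ)).1}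
    with hRdef
  have hRmeas : MeasurableSet R := by
    refine MeasurableSet.iUnion fun k => ?_
    have : {ω : ℕ → E × ℕ+ | (ω ((k : ℕ) + 1)).1 = (ω (k : ℕ)).1} =
        ⋃ i : E, ((fun ω : ℕ → E × ℕ+ => (ω ((k : ℕ) + 1)).1) ⁻¹' {i} ∩
          (fun ω : ℕ → E × ℕ+ => (ω (k : ℕ)).1) ⁻¹' {i}) := by
      ext ω
      simp only [Set.mem_iUnion, Set.mem_inter_iff, Set.mem_preimage, Set.mem_singleton_iff,
        Set.mem_setOf_eq]
      constructor
      · intro h; exact ⟨(ω (k : ℕ)).1, h, rfl⟩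
      · rintro ⟨i, h1, h2⟩; rw [h1, h2]
    rw [this]
    exact MeasurableSet.iUnion fun i => MeasurableSet.inter
      ((measurable_fst_coord _) (measurableSet_singleton _))
      ((measurable_fst_coord _) (measurableSet_singleton _))
  have hRnull : μ R = 0 := by
    refine le_antisymm (le_trans (measure_iUnion_le _) ?_) zero_le
    have : ∀ k : Fin (t + 1), μ {ω : ℕ → E × ℕ+ | (ω ((k : ℕ) + 1)).1 = (ω (k : ℕ)).1} = 0 :=
      fun k => repeat_null hPii hμ' (k : ℕ)
    rw [tsum_congr this]
    simp
  have hnotR : ∀ ω : ℕ → E × ℕ+, ω ∉ R → ∀ k ≤ t, (ω (k + 1)).1 ≠ (ω k).1 := by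
    intro ω hω k hk
    rw [hRdef, Set.mem_iUnion] at hω
    push_neg at hω
    exact hω ⟨k, by omega⟩
  -- pointwise equivalences off R
  have key0 : ∀ ω : ℕ → E × ℕ+, (∀ k ≤ t, (ω (k + 1)).1 ≠ (ω k).1) →
      ((∀ r ≤ t, SProc ω r = s r) ↔
        ((∀ k ≤ numJumps s t, (ω k).1 = vFn s t k) ∧
          (∀ k < numJumps s t, (ω k).2 = gFn s t k) ∧
          t - jumpTime s t (numJumps s t) < ((ω (numJumps s t)).2 : ℕ))) := by
    intro ω hnr
    constructor
    · intro hS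
      obtain ⟨hL, hT, h3⟩ := path_imp_match ω s t hnr hS
      have hτm : tauProc ω (numJumps s t) = jumpTime s t (numJumps s t) :=
        tau_eq_jumpTime ω s t hT (numJumps s t) le_rfl
      refine ⟨fun k hk => hL k hk, fun k hk => ?_, ?_⟩
      · exact PNat.coe_injective (by rw [hT k hk, hgcoe k hk])
      · rw [tau_succ, hτm] at h3
        omega
    · rintro ⟨hL, hT, h3⟩
      have hT' : ∀ k < numJumps s t, ((ω k).2 : ℕ) = jumpTime s t (k + 1) - jumpTime s t k :=
        fun k hk => by rw [hT k hk, hgcoe k hk]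
      have hτm : tauProc ω (numJumps s t) = jumpTime s t (numJumps s t) :=
        tau_eq_jumpTime ω s t hT' (numJumps s t) le_rfl
      have h3' : t < tauProc ω (numJumps s t + 1) := by
        rw [tau_succ, hτm]
        omega
      exact match_imp_path ω s t hL hT' h3'
  have key0' : ∀ ω : ℕ → E × ℕ+, (∀ k ≤ t, (ω (k + 1)).1 ≠ (ω k).1) →
      (∀ r ≤ t, SProc ω r = s r) →
      (∀ k < numJumps s t, ((ω k).2 : ℕ) = jumpTime s t (k + 1) - jumpTime s t k) ∧
        tauProc ω (numJumps s t + 1) =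
          jumpTime s t (numJumps s t) + ((ω (numJumps s t)).2 : ℕ) := by
    intro ω hnr hS
    obtain ⟨hL, hT, h3⟩ := path_imp_match ω s t hnr hS
    have hτm : tauProc ω (numJumps s t) = jumpTime s t (numJumps s t) :=
      tau_eq_jumpTime ω s t hT (numJumps s t) le_rfl
    exact ⟨hT, by rw [tau_succ, hτm]⟩
  have key1 : ∀ ω : ℕ → E × ℕ+, (∀ k ≤ t, (ω (k + 1)).1 ≠ (ω k).1) →
      (((∀ r ≤ t, SProc ω r = s r) ∧ SProc ω (t + 1) = s t) ↔
        ((∀ k ≤ numJumps s t, (ω k).1 = vFn s t k) ∧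
          (∀ k < numJumps s t, (ω k).2 = gFn s t k) ∧
          t - jumpTime s t (numJumps s t) + 1 < ((ω (numJumps s t)).2 : ℕ))) := by
    intro ω hnr
    constructor
    · rintro ⟨hS, hS1⟩
      obtain ⟨hL, hT, h3⟩ := (key0 ω hnr).mp hS
      obtain ⟨hT', hτm1⟩ := key0' ω hnr hS
      refine ⟨hL, hT, ?_⟩
      rcases eq_or_lt_of_le (show t - jumpTime s t (numJumps s t) + 1 ≤
          ((ω (numJumps s t)).2 : ℕ) by omega) with he | hlt
      · exfalso
        have hτeq : tauProc ω (numJumps s t + 1) = t + 1 := by omega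
        have heq := match_SProc_succ_of_eq ω s t hτeq
        rw [hS1] at heq
        have hnm := hnr (numJumps s t) hmt
        rw [← heq, ← hvm] at hnm
        exact hnm (hL (numJumps s t) le_rfl).symm
      · exact hlt
    · rintro ⟨hL, hT, h3⟩
      have hS : ∀ r ≤ t, SProc ω r = s r := (key0 ω hnr).mpr ⟨hL, hT, by omega⟩
      obtain ⟨hT', hτm1⟩ := key0' ω hnr hS
      refine ⟨hS, ?_⟩
      have hgt : t + 1 < tauProc ω (numJumps s t + 1) := by omega
      rw [match_SProc_succ_of_gt ω s t hT' hgt, hL (numJumps s t) le_rfl, hvm]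
  have key2 : ∀ (j : E), j ≠ s t → ∀ ω : ℕ → E × ℕ+, (∀ k ≤ t, (ω (k + 1)).1 ≠ (ω k).1) →
      (((∀ r ≤ t, SProc ω r = s r) ∧ SProc ω (t + 1) = j) ↔
        ((∀ k ≤ numJumps s t + 1,
            (ω k).1 = (if k = numJumps s t + 1 then j else vFn s t k)) ∧
          (∀ k < numJumps s t + 1,
            (ω k).2 = (if k = numJumps s t then
              (t - jumpTime s t (numJumps s t)).succPNat else gFn s t k)))) := by
    intro j hj ω hnr
    constructor
    · rintro ⟨hS, hS1⟩
      obtain ⟨hL, hT, h3⟩ := (key0 ω hnr).mp hS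
      obtain ⟨hT', hτm1⟩ := key0' ω hnr hS
      have hTm : ((ω (numJumps s t)).2 : ℕ) = t - jumpTime s t (numJumps s t) + 1 := by
        rcases eq_or_lt_of_le (show t - jumpTime s t (numJumps s t) + 1 ≤
            ((ω (numJumps s t)).2 : ℕ) by omega) with he | hlt
        · omega
        · exfalso
          have hgt : t + 1 < tauProc ω (numJumps s t + 1) := by omega
          have heq := match_SProc_succ_of_gt ω s t hT' hgt
          rw [hS1, hL (numJumps s t) le_rfl, hvm] at heq
          exact hj heq
      have hτeq : tauProc ω (numJumps s t + 1) = t + 1 := by omega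
      have hS1' : (ω (numJumps s t + 1)).1 = j := by
        rw [← hS1, match_SProc_succ_of_eq ω s t hτeq]
      constructor
      · intro k hk
        rcases eq_or_lt_of_le hk with rfl | hlt
        · rw [if_pos rfl]; exact hS1'
        · rw [if_neg (by omega)]; exact hL k (by omega)
      · intro k hk
        rcases eq_or_lt_of_le (show k ≤ numJumps s t by omega) with rfl | hlt
        · rw [if_pos rfl]
          exact PNat.coe_injective (by rw [hTm]; simp)
        · rw [if_neg (by omega)]; exact hT k (by omega)
    · rintro ⟨hL, hT⟩
      have hL' : ∀ k ≤ numJumps s t, (ω k).1 = vFn s t k := fun k hk => by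
        have := hL k (by omega)
        rwa [if_neg (by omega)] at this
      have hTg : ∀ k < numJumps s t, (ω k).2 = gFn s t k := fun k hk => by
        have := hT k (by omega)
        rwa [if_neg (by omega)] at this
      have hTm : ((ω (numJumps s t)).2 : ℕ) = t - jumpTime s t (numJumps s t) + 1 := by
        have := hT (numJumps s t) (by omega)
        rw [if_pos rfl] at this
        rw [this]
        simp
      have hS : ∀ r ≤ t, SProc ω r = s r := (key0 ω hnr).mpr ⟨hL', hTg, by omega⟩
      obtain ⟨hT', hτm1⟩ := key0' ω hnr hS
      have hτeq : tauProc ω (numJumps s t + 1) = t + 1 := by omega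
      refine ⟨hS, ?_⟩
      rw [match_SProc_succ_of_eq ω s t hτeq]
      have := hL (numJumps s t + 1) le_rfl
      rwa [if_pos rfl] at this
  -- replacing events by cylinder-type sets, modulo the null set R
  have hmeasure_eq : ∀ (A B : Set (ℕ → E × ℕ+)), (∀ ω, ω ∉ R → (ω ∈ A ↔ ω ∈ B)) →
      μ A = μ B := by
    have haux : ∀ A : Set (ℕ → E × ℕ+), μ A = μ (A \ R) := by
      intro A
      have h1 : μ (A ∩ R) + μ (A \ R) = μ A := measure_inter_add_diff A hRmeas
      have h2 : μ (A ∩ R) = 0 :=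
        le_antisymm (le_trans (measure_mono Set.inter_subset_right) hRnull.le) zero_le
      rw [h2, zero_add] at h1
      exact h1.symm
    intro A B hAB
    rw [haux A, haux B]
    congr 1
    ext ω
    simp only [Set.mem_diff]
    exact ⟨fun ⟨h1, h2⟩ => ⟨(hAB ω h2).mp h1, h2⟩, fun ⟨h1, h2⟩ => ⟨(hAB ω h2).mpr h1, h2⟩⟩
  -- common weight
  set W : ENNReal := (∏ k ∈ Finset.range (numJumps s t), P (vFn s t k) (vFn s t (k + 1))) *
    (∏ k ∈ Finset.range (numJumps s t), F (vFn s t k) (gFn s t k)) with hW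
  have hhd : holdDur s t = t - jumpTime s t (numJumps s t) := rfl
  have htail : ∀ a : ℕ,
      μ {ω : ℕ → E × ℕ+ | (∀ k ≤ numJumps s t, (ω k).1 = vFn s t k) ∧
        (∀ k < numJumps s t, (ω k).2 = gFn s t k) ∧
        a < ((ω (numJumps s t)).2 : ℕ)} = W * survF F (s t) a := by
    intro a
    rw [tail_measure hProw hμ' (numJumps s t) (vFn s t) (gFn s t) a, if_pos hv0, one_mul,
      hvm, hW]
  have hE0 : μ {ω : ℕ → E × ℕ+ | ∀ r ≤ t, SProc ω r = s r} =
      W * survF F (s t) (t - jumpTime s t (numJumps s t)) := by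
    rw [hmeasure_eq {ω : ℕ → E × ℕ+ | ∀ r ≤ t, SProc ω r = s r}
      {ω : ℕ → E × ℕ+ | (∀ k ≤ numJumps s t, (ω k).1 = vFn s t k) ∧
        (∀ k < numJumps s t, (ω k).2 = gFn s t k) ∧
        t - jumpTime s t (numJumps s t) < ((ω (numJumps s t)).2 : ℕ)}
      (fun ω hω => key0 ω (hnotR ω hω))]
    exact htail _
  have hE1 : μ {ω : ℕ → E × ℕ+ | (∀ r ≤ t, SProc ω r = s r) ∧ SProc ω (t + 1) = s t} =
      W * survF F (s t) (t - jumpTime s t (numJumps s t) + 1) := by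
    rw [hmeasure_eq {ω : ℕ → E × ℕ+ | (∀ r ≤ t, SProc ω r = s r) ∧ SProc ω (t + 1) = s t}
      {ω : ℕ → E × ℕ+ | (∀ k ≤ numJumps s t, (ω k).1 = vFn s t k) ∧
        (∀ k < numJumps s t, (ω k).2 = gFn s t k) ∧
        t - jumpTime s t (numJumps s t) + 1 < ((ω (numJumps s t)).2 : ℕ)}
      (fun ω hω => key1 ω (hnotR ω hω))]
    exact htail _
  have hE2 : ∀ (j : E), j ≠ s t →
      μ {ω : ℕ → E × ℕ+ | (∀ r ≤ t, SProc ω r = s r) ∧ SProc ω (t + 1) = j} =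
      W * F (s t) (t - jumpTime s t (numJumps s t)).succPNat * P (s t) j := by
    intro j hj
    rw [hmeasure_eq {ω : ℕ → E × ℕ+ | (∀ r ≤ t, SProc ω r = s r) ∧ SProc ω (t + 1) = j}
      (hmuSet (numJumps s t + 1) (fun k => if k = numJumps s t + 1 then j else vFn s t k)
        (fun k => if k = numJumps s t then
          (t - jumpTime s t (numJumps s t)).succPNat else gFn s t k))
      (fun ω hω => key2 j hj ω (hnotR ω hω))]
    rw [hμ']
    have h0 : (if 0 = numJumps s t + 1 then j else vFn s t 0) = l₀ := by
      rw [if_neg (by omega)]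
      exact hv0
    rw [Finset.prod_range_succ]
    have hcong : ∀ k ∈ Finset.range (numJumps s t),
        P (if k = numJumps s t + 1 then j else vFn s t k)
            (if k + 1 = numJumps s t + 1 then j else vFn s t (k + 1)) *
          F (if k = numJumps s t + 1 then j else vFn s t k)
            (if k = numJumps s t then
              (t - jumpTime s t (numJumps s t)).succPNat else gFn s t k) =
        P (vFn s t k) (vFn s t (k + 1)) * F (vFn s t k) (gFn s t k) := by
      intro k hk
      rw [Finset.mem_range] at hk
      rw [if_neg (show ¬ k = numJumps s t + 1 by omega),
        if_neg (show ¬ k + 1 = numJumps s t + 1 by omega),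
        if_neg (show ¬ k = numJumps s t by omega)]
    rw [Finset.prod_congr rfl hcong, h0, if_pos rfl, Finset.prod_mul_distrib]
    simp only [if_neg (show ¬ numJumps s t = numJumps s t + 1 by omega),
      if_pos (rfl : numJumps s t + 1 = numJumps s t + 1), if_pos (rfl : numJumps s t = numJumps s t),
      if_true]
    rw [hvm, hW]
    ring
  -- survival function bounds
  have hbne : survF F (s t) (holdDur s t) ≠ 0 := hpos.ne'
  have hbtop : survF F (s t) (holdDur s t) ≠ ⊤ :=
    ne_top_of_le_ne_top (by simp) (survF_le_one F hFpmf (s t) (holdDur s t))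
  have hcancel : survF F (s t) (holdDur s t) * (survF F (s t) (holdDur s t))⁻¹ = 1 :=
    ENNReal.mul_inv_cancel hbne hbtop
  rw [hhd] at hcancel
  constructor
  · rw [hE1, hE0, hhd, div_eq_mul_inv]
    calc W * survF F (s t) (t - jumpTime s t (numJumps s t) + 1)
        = W * survF F (s t) (t - jumpTime s t (numJumps s t) + 1) * 1 := by rw [mul_one]
      _ = W * survF F (s t) (t - jumpTime s t (numJumps s t) + 1) *
          (survF F (s t) (t - jumpTime s t (numJumps s t)) *
            (survF F (s t) (t - jumpTime s t (numJumps s t)))⁻¹) := by rw [hcancel]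
      _ = W * survF F (s t) (t - jumpTime s t (numJumps s t)) *
            survF F (s t) (t - jumpTime s t (numJumps s t) + 1) *
          (survF F (s t) (t - jumpTime s t (numJumps s t)))⁻¹ := by ring
  · intro j hj
    rw [hE2 j hj, hE0, hhd, div_eq_mul_inv]
    calc W * F (s t) (t - jumpTime s t (numJumps s t)).succPNat * P (s t) j
        = W * F (s t) (t - jumpTime s t (numJumps s t)).succPNat * P (s t) j * 1 := by
          rw [mul_one]
      _ = W * F (s t) (t - jumpTime s t (numJumps s t)).succPNat * P (s t) j *
          (survF F (s t) (t - jumpTime s t (numJumps s t)) *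
            (survF F (s t) (t - jumpTime s t (numJumps s t)))⁻¹) := by rw [hcancel]
      _ = W * survF F (s t) (t - jumpTime s t (numJumps s t)) *
          (F (s t) (t - jumpTime s t (numJumps s t)).succPNat *
            (survF F (s t) (t - jumpTime s t (numJumps s t)))⁻¹) * P (s t) j := by ring
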